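/- Let M > 0 and let f : ℝ^d → ℝ satisfy |f(z) − f(z′)| ≤ M (1 + |z| + |z′|) |z − z′| for all z, z′ ∈ ℝ^d. Then for every n ∈ ℕ the truncated function z ↦ f(hₙ(z)) is globally Lipschitz continuous with constant M (1 + 2√d (n+1)), i.e. |f(hₙ(z)) − f(hₙ(z′))| ≤ M (1 + 2√d (n+1)) |z − z′| for all z, z′ ∈ ℝ^d. -/

import Mathlib

set_option maxHeartbeats 1000000

/-- The truncation family for the identity from Section 4 of the paper. -/
noncomputable def htilde (n : ℕ) (z : ℝ) : ℝ :=
  if (n : ℝ) + 2 < z then (n : ℝ) + 1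
  else if z < -((n : ℝ) + 2) then -((n : ℝ) + 1)
  else if |z| ≤ (n : ℝ) then z
  else if 0 ≤ z then (-(n : ℝ) ^ 2 + 2 * n * z - z * (z - 4)) / 4
  else ((n : ℝ) ^ 2 + 2 * n * z + z * (z + 4)) / 4

lemma htilde_bound (n : ℕ) (z : ℝ) : |htilde n z| ≤ (n : ℝ) + 1 := by
  have hn : (0:ℝ) ≤ n := Nat.cast_nonneg n
  unfold htilde
  rw [abs_le]
  split_ifs <;>
    simp (failIfUnchanged := false) only [abs_le, not_and_or, not_le, not_lt] at * <;>
    (try casesm* _ ∨ _) <;>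
    constructor <;>
    first
    | linarith
    | nlinarith [sq_nonneg (z - n), sq_nonneg (z + n), sq_nonneg (z - n - 2), sq_nonneg (z + n + 2)]

lemma htilde_mono (n : ℕ) (a b : ℝ) (hab : a ≤ b) : htilde n a ≤ htilde n b := by
  have hn : (0:ℝ) ≤ n := Nat.cast_nonneg n
  unfold htilde
  split_ifs <;>
    simp (failIfUnchanged := false) only [abs_le, not_and_or, not_le, not_lt] at * <;>
    (try casesm* _ ∨ _) <;>
    first
    | linarith
    | nlinarith [sq_nonneg (a - n - 2), sq_nonneg (b - n - 2), sq_nonneg (a + n + 2), sq_nonneg (b + n + 2)]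

lemma htilde_lipaux (n : ℕ) (a b : ℝ) (hab : a ≤ b) : htilde n b - htilde n a ≤ b - a := by
  have hn : (0:ℝ) ≤ n := Nat.cast_nonneg n
  unfold htilde
  split_ifs <;>
    simp (failIfUnchanged := false) only [abs_le, not_and_or, not_le, not_lt] at * <;>
    (try casesm* _ ∨ _) <;>
    first
    | linarith
    | nlinarith [sq_nonneg (a - n - 2), sq_nonneg (b - n - 2), sq_nonneg (a + n + 2), sq_nonneg (b + n + 2)]

lemma htilde_lip (n : ℕ) (a b : ℝ) : |htilde n a - htilde n b| ≤ |a - b| := by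
  rcases le_total a b with h | h
  · rw [abs_sub_comm, abs_sub_comm a b,
      abs_of_nonneg (sub_nonneg.2 (htilde_mono n a b h)), abs_of_nonneg (sub_nonneg.2 h)]
    exact htilde_lipaux n a b h
  · rw [abs_of_nonneg (sub_nonneg.2 (htilde_mono n b a h)), abs_of_nonneg (sub_nonneg.2 h)]
    exact htilde_lipaux n b a h

/-- The componentwise truncation `hₙ : ℝ^d → ℝ^d`, `hₙ(z) = (h̃ₙ(z₁), …, h̃ₙ(z_d))`. -/
noncomputable def hvec (d n : ℕ) (z : EuclideanSpace ℝ (Fin d)) : EuclideanSpace ℝ (Fin d) :=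
  WithLp.toLp 2 (fun i => htilde n (z i))

lemma hvec_norm_le (d n : ℕ) (z : EuclideanSpace ℝ (Fin d)) :
    ‖hvec d n z‖ ≤ Real.sqrt d * ((n : ℝ) + 1) := by
  have hn1 : (0:ℝ) ≤ (n : ℝ) + 1 := by positivity
  rw [EuclideanSpace.norm_eq]
  have h1 : ∑ i, ‖hvec d n z i‖ ^ 2 ≤ (d : ℝ) * ((n : ℝ) + 1) ^ 2 := by
    calc ∑ i, ‖hvec d n z i‖ ^ 2 ≤ ∑ _i : Fin d, ((n : ℝ) + 1) ^ 2 := by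
          apply Finset.sum_le_sum
          intro i _
          have := htilde_bound n (z i)
          have h0 : ‖hvec d n z i‖ = |htilde n (z i)| := rfl
          rw [h0]
          nlinarith [abs_nonneg (htilde n (z i))]
      _ = (d : ℝ) * ((n : ℝ) + 1) ^ 2 := by simp [mul_comm]
  calc Real.sqrt (∑ i, ‖hvec d n z i‖ ^ 2) ≤ Real.sqrt ((d : ℝ) * ((n : ℝ) + 1) ^ 2) :=
        Real.sqrt_le_sqrt h1
    _ = Real.sqrt d * ((n : ℝ) + 1) := by
        rw [Real.sqrt_mul (Nat.cast_nonneg d), Real.sqrt_sq hn1]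

lemma hvec_sub_norm_le (d n : ℕ) (z z' : EuclideanSpace ℝ (Fin d)) :
    ‖hvec d n z - hvec d n z'‖ ≤ ‖z - z'‖ := by
  rw [EuclideanSpace.norm_eq, EuclideanSpace.norm_eq]
  apply Real.sqrt_le_sqrt
  apply Finset.sum_le_sum
  intro i _
  have h0 : ‖(hvec d n z - hvec d n z') i‖ = |htilde n (z i) - htilde n (z' i)| := rfl
  have h1 : ‖(z - z') i‖ = |z i - z' i| := rfl
  rw [h0, h1]
  have := htilde_lip n (z i) (z' i)
  nlinarith [abs_nonneg (htilde n (z i) - htilde n (z' i)), abs_nonneg (z i - z' i)]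

theorem stmt_11 (d : ℕ) (M : ℝ) (hM : 0 < M)
    (f : EuclideanSpace ℝ (Fin d) → ℝ)
    (hf : ∀ z z' : EuclideanSpace ℝ (Fin d),
      |f z - f z'| ≤ M * (1 + ‖z‖ + ‖z'‖) * ‖z - z'‖)
    (n : ℕ) :
    ∀ z z' : EuclideanSpace ℝ (Fin d),
      |f (hvec d n z) - f (hvec d n z')| ≤
        M * (1 + 2 * Real.sqrt d * ((n : ℝ) + 1)) * ‖z - z'‖ := by
  intro z z'
  have h1 := hf (hvec d n z) (hvec d n z')
  have h2 := hvec_norm_le d n z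
  have h3 := hvec_norm_le d n z'
  have h4 := hvec_sub_norm_le d n z z'
  have hfac : M * (1 + ‖hvec d n z‖ + ‖hvec d n z'‖) ≤
      M * (1 + 2 * Real.sqrt d * ((n : ℝ) + 1)) := by
    apply mul_le_mul_of_nonneg_left _ hM.le
    linarith
  calc |f (hvec d n z) - f (hvec d n z')|
      ≤ M * (1 + ‖hvec d n z‖ + ‖hvec d n z'‖) * ‖hvec d n z - hvec d n z'‖ := h1
    _ ≤ M * (1 + 2 * Real.sqrt d * ((n : ℝ) + 1)) * ‖z - z'‖ := by
        apply mul_le_mul hfac h4 (norm_nonneg _)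
        positivity
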